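/- arXiv:2502.07976 — 4 statements merged into one kernel-verified Lean document; each statement's English description precedes it below -/
import Mathlib

section
/- On an interval E = (a,b) with constant κ > 0 and τ > 0, let φ_a, φ_b be the linear hat functions with φ_a(a)=1, φ_a(b)=0, φ_b(a)=0, φ_b(b)=1, and r = φ_b − φ_a. If q = α + βr ∈ P₁(E) satisfies ∫_E κ⁻¹ q p dx + (|E|/(2τ)) ∫_E p' q' dx = (|E|/(2τ))[τ(λ_a + λ_b) p'|_E + ∫_E f p' dx] + λ_a p(a) − λ_b p(b) for all p ∈ P₁(E), then α = (κ/|E|)(λ_a − λ_b) and β = 3κ/(6κ + τ|E|) ∫_E f dx. -/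
set_option maxHeartbeats 1000000


open MeasureTheory intervalIntegral

/-- coefficients of the local HDG flux solve on an interval. -/
theorem stmt_4 (a b κ τ lama lamb α β : ℝ) (hab : a < b) (hκ : 0 < κ) (hτ : 0 < τ)
    (f : ℝ → ℝ) (hf : IntervalIntegrable f volume a b)
    (φa φb r q : ℝ → ℝ)
    (hφa : ∀ x, φa x = (b - x) / (b - a))
    (hφb : ∀ x, φb x = (x - a) / (b - a))
    (hr : ∀ x, r x = φb x - φa x)
    (hq : ∀ x, q x = α + β * r x)
    -- the variational identity, tested with all affine p(x) = c₀ + c₁ x (p' = c₁,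
    -- q' = β r' = 2β/(b−a))
    (heq : ∀ c₀ c₁ : ℝ,
      (∫ x in a..b, κ⁻¹ * q x * (c₀ + c₁ * x)) +
          (b - a) / (2 * τ) * (∫ _x in a..b, c₁ * (β * (2 / (b - a)))) =
        (b - a) / (2 * τ) *
            (τ * (lama + lamb) * c₁ + ∫ x in a..b, f x * c₁) +
          lama * (c₀ + c₁ * a) - lamb * (c₀ + c₁ * b)) :
    α = κ / (b - a) * (lama - lamb) ∧
      β = 3 * κ / (6 * κ + τ * (b - a)) * ∫ x in a..b, f x := by
  have hba : b - a ≠ 0 := sub_ne_zero.mpr hab.ne'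
  have hκ' : κ ≠ 0 := hκ.ne'
  have hτ' : τ ≠ 0 := hτ.ne'
  have hden : 6 * κ + τ * (b - a) ≠ 0 := by nlinarith [mul_pos hτ (sub_pos.mpr hab)]
  have key : ∀ c d e : ℝ, (∫ x in a..b, (c + d * x + e * x ^ 2)) =
      c * (b - a) + d * (b ^ 2 - a ^ 2) / 2 + e * (b ^ 3 - a ^ 3) / 3 := by
    intro c d e
    have hc : IntervalIntegrable (fun _ : ℝ => c) volume a b := intervalIntegrable_const
    have hd : IntervalIntegrable (fun x : ℝ => d * x) volume a b :=
      (continuous_const.mul continuous_id).intervalIntegrable a b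
    have he : IntervalIntegrable (fun x : ℝ => e * x ^ 2) volume a b :=
      (continuous_const.mul (continuous_pow 2)).intervalIntegrable a b
    rw [intervalIntegral.integral_add (hc.add hd) he, intervalIntegral.integral_add hc hd,
      intervalIntegral.integral_const, intervalIntegral.integral_const_mul,
      intervalIntegral.integral_const_mul, integral_id, integral_pow]
    simp only [smul_eq_mul]
    push_cast
    ring
  have i1 : (∫ x in a..b, κ⁻¹ * q x * (1 + 0 * x)) = κ⁻¹ * α * (b - a) := by
    have hpt : ∀ x : ℝ, κ⁻¹ * q x * (1 + 0 * x) =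
        (κ⁻¹ * α - κ⁻¹ * β * (a + b) / (b - a)) + (2 * κ⁻¹ * β / (b - a)) * x + 0 * x ^ 2 := by
      intro x
      rw [hq, hr, hφa, hφb]
      field_simp
      ring
    simp only [hpt]
    rw [key]
    field_simp
    ring
  have i2 : (∫ x in a..b, κ⁻¹ * q x * (0 + 1 * x)) =
      κ⁻¹ * α * (b ^ 2 - a ^ 2) / 2
        - κ⁻¹ * β * (a + b) / (b - a) * (b ^ 2 - a ^ 2) / 2
        + 2 * κ⁻¹ * β / (b - a) * (b ^ 3 - a ^ 3) / 3 := by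
    have hpt : ∀ x : ℝ, κ⁻¹ * q x * (0 + 1 * x) =
        0 + (κ⁻¹ * α - κ⁻¹ * β * (a + b) / (b - a)) * x + (2 * κ⁻¹ * β / (b - a)) * x ^ 2 := by
      intro x
      rw [hq, hr, hφa, hφb]
      field_simp
      ring
    simp only [hpt]
    rw [key]
    field_simp
    ring
  have h1 := heq 1 0
  have h2 := heq 0 1
  rw [i1] at h1
  rw [i2] at h2
  simp only [zero_mul, mul_zero, one_mul, mul_one, intervalIntegral.integral_zero,
    intervalIntegral.integral_const, smul_eq_mul, add_zero, zero_add] at h1 h2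
  have hα : α = κ / (b - a) * (lama - lamb) := by
    field_simp at h1 ⊢
    linarith
  refine ⟨hα, ?_⟩
  rw [hα] at h2
  set F := ∫ x in a..b, f x with hF
  field_simp at h2
  have h3 : (β * (6 * κ + τ * (b - a)) - 3 * κ * F) * (8 * τ * κ * (b - a) ^ 4) = 0 := by
    linear_combination (8 * τ * κ * (b - a) ^ 2) * h2
  have h4 : β * (6 * κ + τ * (b - a)) - 3 * κ * F = 0 := by
    rcases mul_eq_zero.mp h3 with h | h
    · exact h
    · exact absurd h (by positivity)
  field_simp
  rw [eq_div_iff (by nlinarith [mul_pos hτ (sub_pos.mpr hab)])]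
  linear_combination h4
end

section
/- (Counterexample, one rectangle, P₁×P₁²×P₁.) Let E = (−h_x/2,h_x/2)×(−h_y/2,h_y/2), κ = 1, f = 0, and g(x,y) = (a x + b)(c y + d) with a = c = 2, b = h_x, d = h_y, so g ≥ 0 on the closure of E. Then u_h(x,y) = a d x + b c y + b d and q_h = −∇g satisfy: (i) ∫_E q_h·p − ∫_E u_h div p = −∫_{∂E} g (p·n) dσ for all p ∈ P₁(E)², and (ii) ∫_E v div q_h + τ∫_{∂E} u_h v dσ = τ∫_{∂E} g v dσ for all v ∈ P₁(E) and any τ > 0; moreover u_h(−h_x/2, −h_y/2) = −h_x h_y < 0. -/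
open MeasureTheory

/-- Integral over an open rectangle (x0,x1) × (y0,y1). -/
noncomputable def rInt (x0 x1 y0 y1 : ℝ) (F : ℝ × ℝ → ℝ) : ℝ :=
  ∫ p in Set.Ioo x0 x1 ×ˢ Set.Ioo y0 y1, F p

/-- Boundary integral ∫_{∂E} F dσ over the rectangle boundary. -/
noncomputable def rBd (x0 x1 y0 y1 : ℝ) (F : ℝ × ℝ → ℝ) : ℝ :=
  (∫ t in x0..x1, F (t, y0)) + (∫ t in x0..x1, F (t, y1)) +
  (∫ t in y0..y1, F (x0, t)) + (∫ t in y0..y1, F (x1, t))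

/-- Boundary integral ∫_{∂E} F · n dσ over the rectangle boundary (outward normal). -/
noncomputable def rBdN (x0 x1 y0 y1 : ℝ) (F : ℝ × ℝ → ℝ × ℝ) : ℝ :=
  (∫ t in x0..x1, -(F (t, y0)).2) + (∫ t in x0..x1, (F (t, y1)).2) +
  (∫ t in y0..y1, -(F (x0, t)).1) + (∫ t in y0..y1, (F (x1, t)).1)

/-- Divergence of a planar vector field. -/
noncomputable def div2 (F : ℝ × ℝ → ℝ × ℝ) (z : ℝ × ℝ) : ℝ :=
  fderiv ℝ (fun w => (F w).1) z (1, 0) + fderiv ℝ (fun w => (F w).2) z (0, 1)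

lemma poly_int (a b c0 c1 c2 : ℝ) :
    (∫ t in a..b, (c0 + c1 * t + c2 * t ^ 2)) =
      c0 * (b - a) + c1 * ((b ^ 2 - a ^ 2) / 2) + c2 * ((b ^ 3 - a ^ 3) / 3) := by
  have h1 : IntervalIntegrable (fun _ : ℝ => c0) volume a b := intervalIntegrable_const
  have h2 : IntervalIntegrable (fun t : ℝ => c1 * t) volume a b :=
    (continuous_const.mul continuous_id).intervalIntegrable a b
  have h3 : IntervalIntegrable (fun t : ℝ => c2 * t ^ 2) volume a b :=
    (continuous_const.mul (continuous_pow 2)).intervalIntegrable a b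
  rw [intervalIntegral.integral_add (h1.add h2) h3, intervalIntegral.integral_add h1 h2,
    intervalIntegral.integral_const, intervalIntegral.integral_const_mul,
    intervalIntegral.integral_const_mul, integral_id, integral_pow, smul_eq_mul]
  push_cast
  ring

lemma edge_int (a b c0 c1 c2 : ℝ) (f : ℝ → ℝ) (h : ∀ t, f t = c0 + c1 * t + c2 * t ^ 2) :
    (∫ t in a..b, f t) =
      c0 * (b - a) + c1 * ((b ^ 2 - a ^ 2) / 2) + c2 * ((b ^ 3 - a ^ 3) / 3) := by
  simp only [h]
  exact poly_int a b c0 c1 c2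

lemma rInt_eq (x0 x1 y0 y1 : ℝ) (hx : x0 ≤ x1) (hy : y0 ≤ y1) (F : ℝ × ℝ → ℝ)
    (hF : Continuous F) :
    rInt x0 x1 y0 y1 F = ∫ x in x0..x1, ∫ y in y0..y1, F (x, y) := by
  have hint : IntegrableOn F (Set.Ioo x0 x1 ×ˢ Set.Ioo y0 y1) :=
    (hF.continuousOn.integrableOn_compact (isCompact_Icc.prod isCompact_Icc)).mono_set
      (Set.prod_mono Set.Ioo_subset_Icc_self Set.Ioo_subset_Icc_self)
  rw [Measure.volume_eq_prod] at hint
  rw [rInt, Measure.volume_eq_prod, setIntegral_prod _ hint]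
  have inner : ∀ x : ℝ, (∫ y in Set.Ioo y0 y1, F (x, y)) = ∫ y in y0..y1, F (x, y) := by
    intro x
    rw [intervalIntegral.integral_of_le hy, integral_Ioc_eq_integral_Ioo]
  simp only [inner]
  rw [intervalIntegral.integral_of_le hx, integral_Ioc_eq_integral_Ioo]

lemma rInt_poly (x0 x1 y0 y1 : ℝ) (hx : x0 ≤ x1) (hy : y0 ≤ y1)
    (c00 c10 c01 c11 c20 c02 : ℝ) :
    rInt x0 x1 y0 y1 (fun z => c00 + c10 * z.1 + c01 * z.2 + c11 * (z.1 * z.2) +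
        c20 * z.1 ^ 2 + c02 * z.2 ^ 2) =
      c00 * ((x1 - x0) * (y1 - y0)) + c10 * ((x1 ^ 2 - x0 ^ 2) / 2 * (y1 - y0)) +
      c01 * ((x1 - x0) * ((y1 ^ 2 - y0 ^ 2) / 2)) +
      c11 * ((x1 ^ 2 - x0 ^ 2) / 2 * ((y1 ^ 2 - y0 ^ 2) / 2)) +
      c20 * ((x1 ^ 3 - x0 ^ 3) / 3 * (y1 - y0)) +
      c02 * ((x1 - x0) * ((y1 ^ 3 - y0 ^ 3) / 3)) := by
  rw [rInt_eq x0 x1 y0 y1 hx hy _ (by fun_prop)]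
  have inner : ∀ x : ℝ,
      (∫ y in y0..y1, (c00 + c10 * x + c01 * y + c11 * (x * y) + c20 * x ^ 2 + c02 * y ^ 2))
        = (c00 + c10 * x + c20 * x ^ 2) * (y1 - y0) + (c01 + c11 * x) * ((y1 ^ 2 - y0 ^ 2) / 2)
          + c02 * ((y1 ^ 3 - y0 ^ 3) / 3) := by
    intro x
    exact edge_int y0 y1 _ _ _ _ (fun y => by ring)
  simp only [inner]
  rw [edge_int x0 x1
    (c00 * (y1 - y0) + c01 * ((y1 ^ 2 - y0 ^ 2) / 2) + c02 * ((y1 ^ 3 - y0 ^ 3) / 3))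
    (c10 * (y1 - y0) + c11 * ((y1 ^ 2 - y0 ^ 2) / 2))
    (c20 * (y1 - y0)) _ (fun x => by ring)]
  ring


/-- counterexample on one rectangle for P₁ × P₁² × P₁: the displayed
(u_h, q_h) solve the local HDG equations with λ_h = g, yet u_h takes the negative
value −h_x h_y at a corner; also g ≥ 0 on the closed rectangle. -/
theorem stmt_12 (hx hy τ : ℝ) (hhx : 0 < hx) (hhy : 0 < hy) (hτ : 0 < τ)
    (g u : ℝ × ℝ → ℝ) (q : ℝ × ℝ → ℝ × ℝ)
    (hg : ∀ z, g z = (2 * z.1 + hx) * (2 * z.2 + hy))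
    (hu : ∀ z, u z = 2 * hy * z.1 + 2 * hx * z.2 + hx * hy)
    (hq : ∀ z, q z = (-(2 * (2 * z.2 + hy)), -(2 * (2 * z.1 + hx)))) :
    (∀ z ∈ Set.Icc (-(hx / 2)) (hx / 2) ×ˢ Set.Icc (-(hy / 2)) (hy / 2), 0 ≤ g z) ∧
    (∀ p0 p1 p2 p3 p4 p5 : ℝ,
      rInt (-(hx / 2)) (hx / 2) (-(hy / 2)) (hy / 2)
          (fun z => (q z).1 * (p0 + p1 * z.1 + p2 * z.2) +
            (q z).2 * (p3 + p4 * z.1 + p5 * z.2)) -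
        rInt (-(hx / 2)) (hx / 2) (-(hy / 2)) (hy / 2) (fun z => u z * (p1 + p5)) =
      -rBdN (-(hx / 2)) (hx / 2) (-(hy / 2)) (hy / 2)
          (fun z => (g z * (p0 + p1 * z.1 + p2 * z.2),
            g z * (p3 + p4 * z.1 + p5 * z.2)))) ∧
    (∀ v0 v1 v2 : ℝ,
      rInt (-(hx / 2)) (hx / 2) (-(hy / 2)) (hy / 2)
          (fun z => (v0 + v1 * z.1 + v2 * z.2) * div2 q z) +
        τ * rBd (-(hx / 2)) (hx / 2) (-(hy / 2)) (hy / 2)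
          (fun z => u z * (v0 + v1 * z.1 + v2 * z.2)) =
      τ * rBd (-(hx / 2)) (hx / 2) (-(hy / 2)) (hy / 2)
          (fun z => g z * (v0 + v1 * z.1 + v2 * z.2))) ∧
    u (-(hx / 2), -(hy / 2)) = -(hx * hy) ∧ -(hx * hy) < 0 := by
  have hxle : -(hx / 2) ≤ hx / 2 := by linarith
  have hyle : -(hy / 2) ≤ hy / 2 := by linarith
  refine ⟨?_, ?_, ?_, ?_, ?_⟩
  · rintro z ⟨hz1, hz2⟩
    rw [hg]
    have := hz1.1
    have := hz2.1
    apply mul_nonneg <;> linarith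
  · intro p0 p1 p2 p3 p4 p5
    have hA : (fun z : ℝ × ℝ => (q z).1 * (p0 + p1 * z.1 + p2 * z.2) +
        (q z).2 * (p3 + p4 * z.1 + p5 * z.2))
        = fun z : ℝ × ℝ => (-2 * hy * p0 + -2 * hx * p3) +
          (-4 * p3 + -2 * hy * p1 + -2 * hx * p4) * z.1 +
          (-4 * p0 + -2 * hy * p2 + -2 * hx * p5) * z.2 +
          (-4 * p5 + -4 * p1) * (z.1 * z.2) + (-4 * p4) * z.1 ^ 2 + (-4 * p2) * z.2 ^ 2 := by
      funext z; simp only [hq]; ring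
    have hB : (fun z : ℝ × ℝ => u z * (p1 + p5))
        = fun z : ℝ × ℝ => (hx * hy * p5 + hx * hy * p1) +
          (2 * hy * p5 + 2 * hy * p1) * z.1 + (2 * hx * p5 + 2 * hx * p1) * z.2 +
          (0 : ℝ) * (z.1 * z.2) + (0 : ℝ) * z.1 ^ 2 + (0 : ℝ) * z.2 ^ 2 := by
      funext z; simp only [hu]; ring
    rw [hA, rInt_poly _ _ _ _ hxle hyle, hB, rInt_poly _ _ _ _ hxle hyle]
    simp only [rBdN]
    rw [edge_int (-(hx / 2)) (hx / 2) 0 0 0,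
        edge_int (-(hx / 2)) (hx / 2) (2 * hx * hy * p3 + hx * hy ^ 2 * p5)
          (4 * hy * p3 + 2 * hy ^ 2 * p5 + 2 * hx * hy * p4) (4 * hy * p4),
        edge_int (-(hy / 2)) (hy / 2) 0 0 0,
        edge_int (-(hy / 2)) (hy / 2) (2 * hx * hy * p0 + hx ^ 2 * hy * p1)
          (4 * hx * p0 + 2 * hx * hy * p2 + 2 * hx ^ 2 * p1) (4 * hx * p2)]
    · ring
    all_goals intro t; simp only [hg]; ring
  · intro v0 v1 v2
    have hdiv : ∀ z : ℝ × ℝ, div2 q z = 0 := by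
      intro z
      have h1 : (fun w : ℝ × ℝ => (q w).1) = fun w : ℝ × ℝ => (-4 : ℝ) * w.2 + (-(2 * hy)) := by
        funext w; simp only [hq]; ring
      have h2 : (fun w : ℝ × ℝ => (q w).2) = fun w : ℝ × ℝ => (-4 : ℝ) * w.1 + (-(2 * hx)) := by
        funext w; simp only [hq]; ring
      have d1 : HasFDerivAt (fun w : ℝ × ℝ => (-4 : ℝ) * w.2 + (-(2 * hy)))
          ((-4 : ℝ) • ContinuousLinearMap.snd ℝ ℝ ℝ) z :=
        (((ContinuousLinearMap.snd ℝ ℝ ℝ).hasFDerivAt).const_mul (-4)).add_const _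
      have d2 : HasFDerivAt (fun w : ℝ × ℝ => (-4 : ℝ) * w.1 + (-(2 * hx)))
          ((-4 : ℝ) • ContinuousLinearMap.fst ℝ ℝ ℝ) z :=
        (((ContinuousLinearMap.fst ℝ ℝ ℝ).hasFDerivAt).const_mul (-4)).add_const _
      rw [div2, h1, h2, d1.fderiv, d2.fderiv]
      simp
    have hZ : (fun z : ℝ × ℝ => (v0 + v1 * z.1 + v2 * z.2) * div2 q z)
        = fun z : ℝ × ℝ => (0 : ℝ) + (0 : ℝ) * z.1 + (0 : ℝ) * z.2 + (0 : ℝ) * (z.1 * z.2) +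
          (0 : ℝ) * z.1 ^ 2 + (0 : ℝ) * z.2 ^ 2 := by
      funext z; rw [hdiv]; ring
    rw [hZ, rInt_poly _ _ _ _ hxle hyle]
    simp only [rBd]
    rw [edge_int (-(hx / 2)) (hx / 2) 0 (2 * hy * v0 - hy ^ 2 * v2) (2 * hy * v1),
        edge_int (-(hx / 2)) (hx / 2) (2 * hx * hy * v0 + hx * hy ^ 2 * v2)
          (2 * hy * v0 + hy ^ 2 * v2 + 2 * hx * hy * v1) (2 * hy * v1),
        edge_int (-(hy / 2)) (hy / 2) 0 (2 * hx * v0 - hx ^ 2 * v1) (2 * hx * v2),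
        edge_int (-(hy / 2)) (hy / 2) (2 * hx * hy * v0 + hx ^ 2 * hy * v1)
          (2 * hx * v0 + 2 * hx * hy * v2 + hx ^ 2 * v1) (2 * hx * v2),
        edge_int (-(hx / 2)) (hx / 2) 0 0 0,
        edge_int (-(hx / 2)) (hx / 2) (2 * hx * hy * v0 + hx * hy ^ 2 * v2)
          (4 * hy * v0 + 2 * hy ^ 2 * v2 + 2 * hx * hy * v1) (4 * hy * v1),
        edge_int (-(hy / 2)) (hy / 2) 0 0 0,
        edge_int (-(hy / 2)) (hy / 2) (2 * hx * hy * v0 + hx ^ 2 * hy * v1)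
          (4 * hx * v0 + 2 * hx * hy * v2 + 2 * hx ^ 2 * v1) (4 * hx * v2)]
    · ring
    all_goals intro t; simp only [hg, hu]; ring
  · rw [hu]; norm_num; ring
  · nlinarith [mul_pos hhx hhy]
end

section
/- (Counterexample, two unit squares, RT₀ with τ = 0.) Let E₁ = (0,1)², E₂ = (1,2)×(0,1), with common edge N₁₂ = {1}×(0,1), κ = 1, f = 0, and Dirichlet data g = 10 on {0}×(0,1) and g = 0 on the rest of the outer boundary. Then the HDG solution with piecewise constant u and λ and rectangular RT₀ fluxes, τ = 0, is u_h|_{E₁} = 9/4, u_h|_{E₂} = −1/4, λ_h|_{N₁₂} = −1, with q_h|_{E₁}(x,y) = (11 − 27(x−1/2), 27(y−1/2)) and q_h|_{E₂}(x,y) = (−1 + 3(x−3/2), −3(y−1/2)). In particular, λ_h and u_h attain negative values. -/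
open MeasureTheory

lemma linlin_int (a b c d x0 x1 : ℝ) :
    ∫ x in x0..x1, (a + b*x)*(c + d*x) =
      a*c*(x1-x0) + (a*d+b*c)*(x1^2-x0^2)/2 + b*d*(x1^3-x0^3)/3 := by
  have h : ∀ x ∈ Set.uIcc x0 x1, HasDerivAt
      (fun x : ℝ => a*c*x + (a*d+b*c)*(x^2/2) + b*d*(x^3/3)) ((a + b*x)*(c + d*x)) x := by
    intro x _
    have h1 : HasDerivAt (fun x : ℝ => a*c*x + (a*d+b*c)*(x^2/2) + b*d*(x^3/3))
        (a*c*1 + (a*d+b*c)*((2*x^1)/2) + b*d*((3*x^2)/3)) x := by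
      exact (((hasDerivAt_id x).const_mul (a*c)).add
        (((hasDerivAt_pow 2 x).div_const 2).const_mul (a*d+b*c))).add
        (((hasDerivAt_pow 3 x).div_const 3).const_mul (b*d))
    convert h1 using 1
    ring
  rw [intervalIntegral.integral_eq_sub_of_hasDerivAt h ((by continuity : Continuous fun x : ℝ => (a + b*x)*(c + d*x)).intervalIntegrable _ _)]
  ring

lemma rInt_split (x0 x1 y0 y1 : ℝ) (hx : x0 ≤ x1) (hy : y0 ≤ y1)
    (A B : ℝ → ℝ) (hA : Continuous A) (hB : Continuous B) :
    rInt x0 x1 y0 y1 (fun z => A z.1 + B z.2)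
      = (y1 - y0) * (∫ x in x0..x1, A x) + (x1 - x0) * (∫ y in y0..y1, B y) := by
  unfold rInt
  have hcont : Continuous (fun z : ℝ × ℝ => A z.1 + B z.2) :=
    (hA.comp continuous_fst).add (hB.comp continuous_snd)
  have hint : IntegrableOn (fun z : ℝ × ℝ => A z.1 + B z.2)
      (Set.Ioo x0 x1 ×ˢ Set.Ioo y0 y1) := by
    exact (hcont.continuousOn.integrableOn_compact
      ((isCompact_Icc (a := x0) (b := x1)).prod (isCompact_Icc (a := y0) (b := y1)))).mono_set
      (Set.prod_mono Set.Ioo_subset_Icc_self Set.Ioo_subset_Icc_self)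
  rw [Measure.volume_eq_prod] at hint ⊢
  rw [MeasureTheory.setIntegral_prod _ hint]
  have hvol : (volume (Set.Ioo y0 y1)).toReal = y1 - y0 := by
    rw [Real.volume_Ioo, ENNReal.toReal_ofReal (by linarith)]
  have hvolx : (volume (Set.Ioo x0 x1)).toReal = x1 - x0 := by
    rw [Real.volume_Ioo, ENNReal.toReal_ofReal (by linarith)]
  have hBint : IntegrableOn B (Set.Ioo y0 y1) :=
    (hB.integrableOn_Icc).mono_set Set.Ioo_subset_Icc_self
  have hAint : IntegrableOn A (Set.Ioo x0 x1) :=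
    (hA.integrableOn_Icc).mono_set Set.Ioo_subset_Icc_self
  have key : ∀ x : ℝ, (∫ y in Set.Ioo y0 y1, (A x + B y)) =
      (y1 - y0) * A x + ∫ y in Set.Ioo y0 y1, B y := by
    intro x
    rw [MeasureTheory.integral_add (show Integrable (fun _ : ℝ => A x) (volume.restrict (Set.Ioo y0 y1)) from integrableOn_const
      measure_Ioo_lt_top.ne enorm_ne_top) hBint, setIntegral_const, smul_eq_mul, measureReal_def, hvol]
  simp only [key]
  rw [MeasureTheory.integral_add (hAint.const_mul _)
    (integrableOn_const measure_Ioo_lt_top.ne enorm_ne_top)]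
  rw [MeasureTheory.integral_const_mul, setIntegral_const, smul_eq_mul, measureReal_def, hvolx,
    intervalIntegral.integral_of_le hx, intervalIntegral.integral_of_le hy,
    MeasureTheory.integral_Ioc_eq_integral_Ioo, MeasureTheory.integral_Ioc_eq_integral_Ioo]

lemma rInt_const (x0 x1 y0 y1 c : ℝ) (hx : x0 ≤ x1) (hy : y0 ≤ y1) :
    rInt x0 x1 y0 y1 (fun _ => c) = (x1 - x0) * (y1 - y0) * c := by
  have h : (fun _ : ℝ × ℝ => c) = fun z => (fun _ : ℝ => c) z.1 + (fun _ : ℝ => (0:ℝ)) z.2 := by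
    funext z; simp
  rw [h, rInt_split _ _ _ _ hx hy _ _ continuous_const continuous_const]
  simp [intervalIntegral.integral_const]; ring

/-- counterexample for P₀ × RT₀ × P₀ with τ = 0 on the two unit squares
E₁ = (0,1)², E₂ = (1,2) × (0,1) with κ = 1, f = 0, Dirichlet data 10 on {0} × (0,1)
and 0 on the rest of the outer boundary.  The displayed (u_h, q_h, λ_h) with
u_h|E₁ = 9/4, u_h|E₂ = −1/4, λ_h|N₁₂ = −1 satisfy the HDG equations (local equations
tested with all rectangular RT₀ fields p = (c₁ + a₁ x, c₂ + a₂ y), elementwise mass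
balance, and conservation of the normal flux across N₁₂); λ_h and u_h are negative. -/
theorem stmt_14 (u1 u2 lam12 : ℝ) (q1 q2 : ℝ × ℝ → ℝ × ℝ)
    (hu1 : u1 = 9 / 4) (hu2 : u2 = -(1 / 4)) (hlam : lam12 = -1)
    (hq1 : ∀ z, q1 z = (11 - 27 * (z.1 - 1 / 2), 27 * (z.2 - 1 / 2)))
    (hq2 : ∀ z, q2 z = (-1 + 3 * (z.1 - 3 / 2), -3 * (z.2 - 1 / 2))) :
    -- local flux equation on E₁ (λ = 0 on top and bottom, 10 on the left, lam12 on
    -- the right edge)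
    (∀ c1 a1 c2 a2 : ℝ,
      rInt 0 1 0 1 (fun z => (q1 z).1 * (c1 + a1 * z.1) + (q1 z).2 * (c2 + a2 * z.2)) -
        rInt 0 1 0 1 (fun _z => u1 * (a1 + a2)) =
      -((∫ t in (0:ℝ)..1, (0 : ℝ) * (-(c2 + a2 * (0:ℝ)))) +
        (∫ t in (0:ℝ)..1, (0 : ℝ) * (c2 + a2 * 1)) +
        (∫ t in (0:ℝ)..1, 10 * (-(c1 + a1 * (0:ℝ)))) +
        (∫ t in (0:ℝ)..1, lam12 * (c1 + a1 * 1)))) ∧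
    -- local flux equation on E₂ (λ = lam12 on the left, 0 elsewhere)
    (∀ c1 a1 c2 a2 : ℝ,
      rInt 1 2 0 1 (fun z => (q2 z).1 * (c1 + a1 * z.1) + (q2 z).2 * (c2 + a2 * z.2)) -
        rInt 1 2 0 1 (fun _z => u2 * (a1 + a2)) =
      -((∫ t in (0:ℝ)..1, (0 : ℝ) * (-(c2 + a2 * (0:ℝ)))) +
        (∫ t in (0:ℝ)..1, (0 : ℝ) * (c2 + a2 * 1)) +
        (∫ t in (0:ℝ)..1, lam12 * (-(c1 + a1 * 1))) +
        (∫ t in (0:ℝ)..1, (0 : ℝ) * (c1 + a1 * 2)))) ∧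
    -- elementwise mass balance: ∫_E v div q_h = 0 for constant v (f = 0)
    (∀ v : ℝ, rInt 0 1 0 1 (fun z => v * div2 q1 z) = 0) ∧
    (∀ v : ℝ, rInt 1 2 0 1 (fun z => v * div2 q2 z) = 0) ∧
    -- flux conservation across the common edge N₁₂ = {1} × (0,1)
    (∫ t in (0:ℝ)..1, ((q1 (1, t)).1 * 1 + (q2 (1, t)).1 * (-1))) = 0 ∧
    -- λ_h and u_h attain negative values
    lam12 < 0 ∧ u2 < 0 := by
  have hdiv1 : ∀ z : ℝ × ℝ, div2 q1 z = 0 := by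
    intro z
    unfold div2
    have h1 : (fun w : ℝ × ℝ => (q1 w).1) = fun w => 11 - 27 * (w.1 - 1 / 2) := by
      funext w; rw [hq1]
    have h2 : (fun w : ℝ × ℝ => (q1 w).2) = fun w => 27 * (w.2 - 1 / 2) := by
      funext w; rw [hq1]
    have d1 : HasFDerivAt (fun w : ℝ × ℝ => 11 - 27 * (w.1 - 1 / 2))
        (-((27:ℝ) • ContinuousLinearMap.fst ℝ ℝ ℝ)) z :=
      ((hasFDerivAt_fst.sub_const (1/2)).const_mul 27).const_sub 11
    have d2 : HasFDerivAt (fun w : ℝ × ℝ => 27 * (w.2 - 1 / 2))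
        ((27:ℝ) • ContinuousLinearMap.snd ℝ ℝ ℝ) z :=
      (hasFDerivAt_snd.sub_const (1/2)).const_mul 27
    rw [h1, h2, d1.fderiv, d2.fderiv]
    simp
  have hdiv2 : ∀ z : ℝ × ℝ, div2 q2 z = 0 := by
    intro z
    unfold div2
    have h1 : (fun w : ℝ × ℝ => (q2 w).1) = fun w => -1 + 3 * (w.1 - 3 / 2) := by
      funext w; rw [hq2]
    have h2 : (fun w : ℝ × ℝ => (q2 w).2) = fun w => -3 * (w.2 - 1 / 2) := by
      funext w; rw [hq2]
    have d1 : HasFDerivAt (fun w : ℝ × ℝ => -1 + 3 * (w.1 - 3 / 2))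
        ((3:ℝ) • ContinuousLinearMap.fst ℝ ℝ ℝ) z :=
      ((hasFDerivAt_fst.sub_const (3/2)).const_mul 3).const_add (-1)
    have d2 : HasFDerivAt (fun w : ℝ × ℝ => -3 * (w.2 - 1 / 2))
        ((-3:ℝ) • ContinuousLinearMap.snd ℝ ℝ ℝ) z :=
      (hasFDerivAt_snd.sub_const (1/2)).const_mul (-3)
    rw [h1, h2, d1.fderiv, d2.fderiv]
    simp
  refine ⟨?_, ?_, ?_, ?_, ?_, by rw [hlam]; norm_num, by rw [hu2]; norm_num⟩
  · intro c1 a1 c2 a2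
    have hF : (fun z : ℝ × ℝ => (q1 z).1 * (c1 + a1 * z.1) + (q1 z).2 * (c2 + a2 * z.2)) =
        fun z => (fun x => (49/2 + (-27) * x) * (c1 + a1 * x)) z.1 +
                 (fun y => (-(27/2) + 27 * y) * (c2 + a2 * y)) z.2 := by
      funext z; rw [hq1]; ring
    have e1 := rInt_split 0 1 0 1 (by norm_num) (by norm_num)
      (fun x => (49/2 + (-27) * x) * (c1 + a1 * x))
      (fun y => (-(27/2) + 27 * y) * (c2 + a2 * y)) (by fun_prop) (by fun_prop)
    rw [hF, e1, rInt_const 0 1 0 1 _ (by norm_num) (by norm_num), linlin_int, linlin_int,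
      hu1, hlam]
    simp [intervalIntegral.integral_const]
    ring
  · intro c1 a1 c2 a2
    have hF : (fun z : ℝ × ℝ => (q2 z).1 * (c1 + a1 * z.1) + (q2 z).2 * (c2 + a2 * z.2)) =
        fun z => (fun x => (-(11/2) + 3 * x) * (c1 + a1 * x)) z.1 +
                 (fun y => (3/2 + (-3) * y) * (c2 + a2 * y)) z.2 := by
      funext z; rw [hq2]; ring
    have e1 := rInt_split 1 2 0 1 (by norm_num) (by norm_num)
      (fun x => (-(11/2) + 3 * x) * (c1 + a1 * x))
      (fun y => (3/2 + (-3) * y) * (c2 + a2 * y)) (by fun_prop) (by fun_prop)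
    rw [hF, e1, rInt_const 1 2 0 1 _ (by norm_num) (by norm_num), linlin_int, linlin_int,
      hu2, hlam]
    simp [intervalIntegral.integral_const]
    ring
  · intro v
    have h : (fun z : ℝ × ℝ => v * div2 q1 z) = fun _ => (0:ℝ) := by
      funext z; rw [hdiv1]; ring
    rw [h]; simp [rInt]
  · intro v
    have h : (fun z : ℝ × ℝ => v * div2 q2 z) = fun _ => (0:ℝ) := by
      funext z; rw [hdiv2]; ring
    rw [h]; simp [rInt]
  · have h : (fun t : ℝ => (q1 (1, t)).1 * 1 + (q2 (1, t)).1 * (-1)) = fun _ => (0:ℝ) := by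
      funext t; rw [hq1, hq2]; norm_num
    rw [h]; simp
end

section
/- (Counterexample coupling value, Q₁×Q₁²×P₀.) Let two unit squares share a vertical edge N₁₂, κ = 1, f = 0, Dirichlet data 1 on the left outer edge and 0 elsewhere, and stabilization τ > 0 on both squares. With α = 3τ/(4τ+6), the flux-conservation condition at N₁₂ leads to the equation −1/2 − τα/2 + τ/4 − λ(5 + 3τ/2 − τα) = 0, i.e., −(τ²+τ+6)/(8τ+12) = λ(3τ²+29τ+30)/(4τ+6); hence λ = −(τ²+τ+6)(4τ+6)/((8τ+12)(3τ²+29τ+30)) < 0 for every τ > 0. -/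
/-- the flux-conservation condition at the interior edge for the
Q₁ × Q₁² × P₀ counterexample forces a strictly negative skeleton value λ for every
τ > 0. -/
theorem stmt_15 (τ α lam : ℝ) (hτ : 0 < τ) (hα : α = 3 * τ / (4 * τ + 6))
    (hlam : lam =
      -((τ ^ 2 + τ + 6) * (4 * τ + 6)) / ((8 * τ + 12) * (3 * τ ^ 2 + 29 * τ + 30))) :
    (-(1 / 2) - τ * α / 2 + τ / 4 = -(τ ^ 2 + τ + 6) / (8 * τ + 12)) ∧
    (5 + 3 * τ / 2 - τ * α = (3 * τ ^ 2 + 29 * τ + 30) / (4 * τ + 6)) ∧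
    (∀ l : ℝ,
      -(1 / 2) - τ * α / 2 + τ / 4 - l * (5 + 3 * τ / 2 - τ * α) = 0 → l = lam) ∧
    lam < 0 := by
  have h46 : (4 * τ + 6) ≠ 0 := by nlinarith
  have h812 : (8 * τ + 12) ≠ 0 := by nlinarith
  have h3 : (3 * τ ^ 2 + 29 * τ + 30) ≠ 0 := by nlinarith
  have h3pos : (0:ℝ) < 3 * τ ^ 2 + 29 * τ + 30 := by nlinarith
  have e1 : -(1 / 2) - τ * α / 2 + τ / 4 = -(τ ^ 2 + τ + 6) / (8 * τ + 12) := by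
    subst hα; field_simp; ring
  have e2 : 5 + 3 * τ / 2 - τ * α = (3 * τ ^ 2 + 29 * τ + 30) / (4 * τ + 6) := by
    subst hα; field_simp; ring
  refine ⟨e1, e2, ?_, ?_⟩
  · intro l hl
    rw [e1, e2] at hl
    rw [hlam]
    field_simp at hl ⊢
    nlinarith [hl, sq_nonneg τ]
  · rw [hlam]
    apply div_neg_of_neg_of_pos
    · nlinarith
    · nlinarith
end
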